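/- For all integers n ≥ 2 and M with 1 ≤ M < 2^n, the polynomial p(x) = 1 − 4x + M·x^n has exactly one real root in the open interval (1/4, 1/2). -/

import Mathlib

/-- The four-letter DNA alphabet. -/
inductive DNA | A | T | G | C
deriving DecidableEq

/-- Hamming distance between two words (of equal length) given as lists. -/
def hammingD {α : Type*} [DecidableEq α] (x y : List α) : ℕ :=
  (x.zip y).countP (fun p => decide (p.1 ≠ p.2))

/-- A binary word has `D`-bounded running digital sum if in every prefix the
numbers of ones and zeros differ by at most `D`. -/
def brds (D : ℕ) (w : List Bool) : Prop :=
  ∀ k ≤ w.length,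
    (((w.take k).count true : ℤ) - ((w.take k).count false : ℤ)).natAbs ≤ D

/-- The letters `G`, `C` of the DNA alphabet. -/
def isGC : DNA → Bool
  | DNA.G => true
  | DNA.C => true
  | _ => false

/-- A DNA word is `D`-GC-prefix-balanced if in every prefix the number of
letters from {G,C} and the number of letters from {A,T} differ by at most `D`. -/
def gcpb (D : ℕ) (w : List DNA) : Prop :=
  ∀ k ≤ w.length,
    (((w.take k).countP isGC : ℤ) - ((w.take k).countP (fun c => !(isGC c)) : ℤ)).natAbs ≤ D

/-- A word is self-uncorrelated if no proper nonempty prefix equals the suffix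
of the same length. -/
def selfUncorr {α : Type*} (w : List α) : Prop :=
  ∀ k, 1 ≤ k → k ≤ w.length - 1 → w.take k ≠ w.drop (w.length - k)

/-- A set of words is mutually uncorrelated if every word is self-uncorrelated
and for every ordered pair of distinct words `x`, `y` no nonempty prefix of `y`
equals a suffix of `x` of the same length. -/
def mutUncorr {α : Type*} (S : Set (List α)) : Prop :=
  (∀ w ∈ S, selfUncorr w) ∧
  ∀ x ∈ S, ∀ y ∈ S, x ≠ y →
    ∀ k, 1 ≤ k → k ≤ x.length → y.take k ≠ x.drop (x.length - k)

/-- A Dyck word: equal numbers of ones and zeros, and every prefix has at least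
as many ones as zeros. -/
def isDyck (w : List Bool) : Prop :=
  w.count true = w.count false ∧
  ∀ k ≤ w.length, (w.take k).count false ≤ (w.take k).count true

/-- The height of a (Dyck) word is at most `D`: in every prefix the number of
ones exceeds the number of zeros by at most `D`. -/
def heightLe (D : ℕ) (w : List Bool) : Prop :=
  ∀ k ≤ w.length, ((w.take k).count true : ℤ) - ((w.take k).count false : ℤ) ≤ (D : ℤ)

/-- for `n ≥ 2` and `1 ≤ M < 2^n`, the polynomial
`1 - 4x + M xⁿ` has exactly one real root in the open interval `(1/4, 1/2)`. -/
theorem stmt15 (n M : ℕ) (hn : 2 ≤ n) (hM1 : 1 ≤ M) (hM2 : M < 2 ^ n) :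
    ∃! x : ℝ, x ∈ Set.Ioo (1 / 4 : ℝ) (1 / 2) ∧
      1 - 4 * x + (M : ℝ) * x ^ n = 0 := by
  set f : ℝ → ℝ := fun x => 1 - 4 * x + (M : ℝ) * x ^ n with hf
  have hMr : (1:ℝ) ≤ M := by exact_mod_cast hM1
  have hM2r : (M:ℝ) < 2 ^ n := by exact_mod_cast hM2
  have hfa : 0 < f (1/4) := by
    have : (0:ℝ) < (M:ℝ) * (1/4) ^ n := by positivity
    simp only [hf]; nlinarith
  have hfb : f (1/2) < 0 := by
    have h : (M:ℝ) * (1/2)^n < 1 := by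
      rw [one_div, inv_pow, mul_inv_lt_iff₀ (by positivity)]
      simpa using hM2r
    simp only [hf]; nlinarith
  -- convexity
  have hconv : ConvexOn ℝ (Set.Ici (0:ℝ)) f := by
    have h1 : ConvexOn ℝ (Set.Ici (0:ℝ)) (fun x : ℝ => (M:ℝ) * x ^ n) := by
      simpa [smul_eq_mul] using (convexOn_pow n).smul (show (0:ℝ) ≤ M by positivity)
    have h2 : ConvexOn ℝ (Set.Ici (0:ℝ)) (fun x : ℝ => 1 - 4 * x) := by
      refine ⟨convex_Ici 0, fun x _ y _ a b ha hb hab => le_of_eq ?_⟩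
      simp only [smul_eq_mul]
      linear_combination (-1 : ℝ) * hab
    exact h2.add h1
  have hcont : ContinuousOn f (Set.Icc (1/4 : ℝ) (1/2)) := by
    apply Continuous.continuousOn; simp only [hf]; continuity
  have hmem : (0:ℝ) ∈ Set.Ioo (f (1/2)) (f (1/4)) := ⟨hfb, hfa⟩
  obtain ⟨x, hx, hfx⟩ := intermediate_value_Ioo' (by norm_num : (1/4:ℝ) ≤ 1/2) hcont hmem
  refine ⟨x, ⟨hx, hfx⟩, ?_⟩
  -- uniqueness: at most one root in the interval
  have key : ∀ a b : ℝ, a ∈ Set.Ioo (1/4:ℝ) (1/2) → b ∈ Set.Ioo (1/4:ℝ) (1/2) →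
      f a = 0 → f b = 0 → a < b → False := by
    intro a b ha hb hfa0 hfb0 hab
    have hb2 : b < 1/2 := hb.2
    have ha0 : (0:ℝ) < a := lt_trans (by norm_num) ha.1
    set lam : ℝ := (1/2 - b) / (1/2 - a)
    set mu : ℝ := (b - a) / (1/2 - a)
    have hden : (0:ℝ) < 1/2 - a := by linarith [ha.2]
    have hlam : 0 ≤ lam := div_nonneg (by linarith) hden.le
    have hmu : 0 < mu := div_pos (by linarith) hden
    have hsum : lam + mu = 1 := by
      show (1/2 - b)/(1/2 - a) + (b - a)/(1/2 - a) = 1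
      rw [← add_div, div_eq_one_iff_eq hden.ne']
      ring
    have hpt : lam • a + mu • (1/2 : ℝ) = b := by
      show (1/2 - b)/(1/2 - a) * a + (b - a)/(1/2 - a) * (1/2 : ℝ) = b
      rw [div_mul_eq_mul_div, div_mul_eq_mul_div, ← add_div, div_eq_iff hden.ne']
      ring
    have := hconv.2 (Set.mem_Ici.mpr ha0.le) (Set.mem_Ici.mpr (by norm_num : (0:ℝ) ≤ 1/2))
      hlam hmu.le hsum
    rw [hpt, hfa0] at this
    simp only [smul_eq_mul] at this
    rw [hfb0] at this
    nlinarith [mul_neg_of_pos_of_neg hmu hfb]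
  intro y hy
  rcases lt_trichotomy y x with h | h | h
  · exact absurd (key y x hy.1 hx hy.2 hfx h) (fun c => c)
  · exact h
  · exact absurd (key x y hx hy.1 hfx hy.2 h) (fun c => c)
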